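/- Let f : ℝ → ℝ be twice differentiable at l with f(l) = l and f'(l) ≠ 1. Set α = f'(l)/(1 - f'(l)) and β = -f''(l)/(2·(1 - f'(l))³). Define T(x) = f(x) + α·(f(x) - x) + β·(f(x) - x)². Then T(l) = l, T'(l) = 0, and T''(l) = 0. -/

import Mathlib

theorem stmt_9 (f : ℝ → ℝ) (l : ℝ)
    (hf : ∀ᶠ x in nhds l, DifferentiableAt ℝ f x)
    (hf2 : DifferentiableAt ℝ (deriv f) l)
    (hfl : f l = l) (hf' : deriv f l ≠ 1) :
    let α := deriv f l / (1 - deriv f l)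
    let β := -iteratedDeriv 2 f l / (2 * (1 - deriv f l) ^ 3)
    let T : ℝ → ℝ := fun x => f x + α * (f x - x) + β * (f x - x) ^ 2
    T l = l ∧ deriv T l = 0 ∧ iteratedDeriv 2 T l = 0 := by
  intro α β T
  have ha : (1 : ℝ) - deriv f l ≠ 0 := sub_ne_zero.mpr (Ne.symm hf')
  have hfd : DifferentiableAt ℝ f l := hf.self_of_nhds
  have h2f : iteratedDeriv 2 f l = deriv (deriv f) l := by
    rw [iteratedDeriv_succ, iteratedDeriv_one]
  have hder : ∀ x, DifferentiableAt ℝ f x →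
      HasDerivAt T (deriv f x + α * (deriv f x - 1)
        + β * (((2 : ℕ) : ℝ) * (f x - x) ^ (2 - 1) * (deriv f x - 1))) x := by
    intro x hx
    have h1 := hx.hasDerivAt
    have h2 : HasDerivAt (fun y => f y - y) (deriv f x - 1) x := h1.sub (hasDerivAt_id x)
    exact (h1.add (h2.const_mul α)).add ((HasDerivAt.fun_pow h2 2).const_mul β)
  have hfl0 : f l - l = 0 := by rw [hfl]; ring
  have hT0 : T l = l := by
    simp only [T, hfl]
    ring
  have hT1 : deriv T l = 0 := by
    rw [(hder l hfd).deriv, hfl0]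
    simp only [α]
    field_simp
    ring
  refine ⟨hT0, hT1, ?_⟩
  have heq : deriv T =ᶠ[nhds l] fun x => deriv f x + α * (deriv f x - 1)
      + 2 * β * ((f x - x) * (deriv f x - 1)) := by
    filter_upwards [hf] with x hx
    rw [(hder x hx).deriv]
    push_cast
    ring
  set a := deriv f l with hA
  set b := deriv (deriv f) l with hB
  have h1 : HasDerivAt (deriv f) b l := hf2.hasDerivAt
  have hg : HasDerivAt (fun x => f x - x) (a - 1) l := hfd.hasDerivAt.sub (hasDerivAt_id l)
  have hg' : HasDerivAt (fun x => deriv f x - 1) b l := h1.sub_const 1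
  have hD : HasDerivAt (fun x => deriv f x + α * (deriv f x - 1)
      + 2 * β * ((f x - x) * (deriv f x - 1)))
      (b + α * b + 2 * β * ((a - 1) * (a - 1) + (f l - l) * b)) l :=
    (h1.add (hg'.const_mul α)).add ((hg.mul hg').const_mul (2 * β))
  have hit : iteratedDeriv 2 T l = deriv (deriv T) l := by
    rw [iteratedDeriv_succ, iteratedDeriv_one]
  rw [hit, heq.deriv_eq, hD.deriv, hfl0]
  simp only [α, β, h2f, ← hA, ← hB]
  field_simp
  ring
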